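/- Let G be the free metabelian group of rank n with standard generators x₁,…,xₙ. Then every element g ∈ G can be written as a product g = x₁^{γ₁} ⋯ xₙ^{γₙ} · u, where γ₁,…,γₙ are integers and u is an element of the subgroup of G generated by the set {w⁻¹·⁅xᵢ,xⱼ⁆·w : 1 ≤ j < i ≤ n, w an element of the subgroup of G generated by x₁,…,xᵢ}. -/

import Mathlib

/-- The commutator ⁅a,b⁆ = a⁻¹b⁻¹ab (paper convention). -/
def pcomm {G : Type*} [Group G] (a b : G) : G := a⁻¹ * b⁻¹ * a * b

instance (n : ℕ) : (derivedSeries (FreeGroup (Fin n)) 2).Normal :=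
  derivedSeries_normal _ _

/-- The free metabelian group of rank n: the quotient of the free group on n
generators by its second derived subgroup. -/
def freeMetabelian (n : ℕ) :=
  FreeGroup (Fin n) ⧸ derivedSeries (FreeGroup (Fin n)) 2

instance (n : ℕ) : Group (freeMetabelian n) :=
  inferInstanceAs (Group (FreeGroup (Fin n) ⧸ derivedSeries (FreeGroup (Fin n)) 2))

/-- The images of the standard generators of the free group in the free
metabelian group. -/
def xgen (n : ℕ) (i : Fin n) : freeMetabelian n :=
  QuotientGroup.mk (FreeGroup.of i)

open scoped commutatorElement

/-! ### Auxiliary definitions -/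

/-- The generating set of the subgroup `NN n`. -/
abbrev mset (n : ℕ) : Set (freeMetabelian n) :=
  {a : freeMetabelian n |
    ∃ i j : Fin n, j < i ∧
      ∃ w ∈ Subgroup.closure (xgen n '' {k : Fin n | k ≤ i}),
        a = w⁻¹ * pcomm (xgen n i) (xgen n j) * w}

/-- The subgroup generated by the restricted conjugates of basic commutators. -/
abbrev NN (n : ℕ) : Subgroup (freeMetabelian n) := Subgroup.closure (mset n)

/-! ### Metabelian facts -/

lemma metab_comm {n : ℕ} {c d : freeMetabelian n}
    (hc : c ∈ commutator (freeMetabelian n)) (hd : d ∈ commutator (freeMetabelian n)) :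
    c * d = d * c := by
  set π := QuotientGroup.mk' (derivedSeries (FreeGroup (Fin n)) 2) with hπ
  have hsur : Function.Surjective π := QuotientGroup.mk'_surjective _
  have hmap : (commutator (FreeGroup (Fin n))).map π = commutator (freeMetabelian n) := by
    unfold commutator
    rw [Subgroup.map_commutator, Subgroup.map_top_of_surjective _ hsur]
    rfl
  rw [← hmap] at hc hd
  obtain ⟨c', hc', rfl⟩ := hc
  obtain ⟨d', hd', rfl⟩ := hd
  have hm : ⁅c', d'⁆ ∈ derivedSeries (FreeGroup (Fin n)) 2 := by
    have h2 : derivedSeries (FreeGroup (Fin n)) 2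
        = ⁅derivedSeries (FreeGroup (Fin n)) 1, derivedSeries (FreeGroup (Fin n)) 1⁆ :=
      derivedSeries_succ _ _
    rw [h2, derivedSeries_one]
    exact Subgroup.commutator_mem_commutator hc' hd'
  have h1 : π ⁅c', d'⁆ = 1 := by
    rw [hπ]; exact (QuotientGroup.eq_one_iff _).mpr hm
  have h2 : ⁅π c', π d'⁆ = 1 := by rw [← map_commutatorElement]; exact h1
  exact commutatorElement_eq_one_iff_mul_comm.mp h2

lemma pcomm_mem_commutator {n : ℕ} (a b : freeMetabelian n) :
    pcomm a b ∈ commutator (freeMetabelian n) := by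
  have : pcomm a b = ⁅a⁻¹, b⁻¹⁆ := by
    unfold pcomm; rw [commutatorElement_def]; group
  rw [this]
  exact Subgroup.commutator_mem_commutator (Subgroup.mem_top _) (Subgroup.mem_top _)

/-- Conjugation of an element of the commutator subgroup by `u*v` equals
conjugation by `v*u`. -/
lemma conj_swap {n : ℕ} {c : freeMetabelian n} (hc : c ∈ commutator (freeMetabelian n))
    (u v : freeMetabelian n) :
    (u * v)⁻¹ * c * (u * v) = (v * u)⁻¹ * c * (v * u) := by
  have hd : (v * u)⁻¹ * c * (v * u) ∈ commutator (freeMetabelian n) := by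
    have hn : (commutator (freeMetabelian n)).Normal := Subgroup.commutator_normal ⊤ ⊤
    have := hn.conj_mem c hc (v * u)⁻¹
    simpa [mul_assoc] using this
  have hq : pcomm u v ∈ commutator (freeMetabelian n) := pcomm_mem_commutator u v
  have key : (u * v)⁻¹ * c * (u * v)
      = (pcomm u v)⁻¹ * ((v * u)⁻¹ * c * (v * u)) * pcomm u v := by
    unfold pcomm; group
  rw [key, mul_assoc, metab_comm hd hq, ← mul_assoc, inv_mul_cancel, one_mul]

/-- Pure group-theoretic identity used for the Jacobi-type rewriting. -/
lemma key_ident {H : Type*} [Group H] (a b g w : H) :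
    w⁻¹ * (g⁻¹ * pcomm b a * g) * w =
      (w⁻¹ * pcomm b g * w)⁻¹ *
      ((b * w)⁻¹ * pcomm a g * (b * w))⁻¹ *
      (w⁻¹ * pcomm b a * w) *
      ((a * w)⁻¹ * pcomm b g * (a * w)) *
      (w⁻¹ * pcomm a g * w) := by
  unfold pcomm; group

/-! ### Membership lemmas -/

lemma pc_mem {n : ℕ} {k m : Fin n} (hmk : m < k) (z : freeMetabelian n)
    (hz : z = xgen n k ∨ z = (xgen n k)⁻¹) {v : freeMetabelian n}
    (hv : v ∈ Subgroup.closure (xgen n '' {k' : Fin n | k' ≤ k})) :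
    v⁻¹ * pcomm (xgen n m) z * v ∈ NN n := by
  rcases hz with rfl | rfl
  · have h1 : v⁻¹ * pcomm (xgen n m) (xgen n k) * v
        = (v⁻¹ * pcomm (xgen n k) (xgen n m) * v)⁻¹ := by
      unfold pcomm; group
    rw [h1]
    exact inv_mem (Subgroup.subset_closure ⟨k, m, hmk, v, hv, rfl⟩)
  · have hxk : (xgen n k)⁻¹ * v ∈ Subgroup.closure (xgen n '' {k' : Fin n | k' ≤ k}) :=
      mul_mem (inv_mem (Subgroup.subset_closure ⟨k, le_refl k, rfl⟩)) hv
    have h1 : v⁻¹ * pcomm (xgen n m) (xgen n k)⁻¹ * v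
        = ((xgen n k)⁻¹ * v)⁻¹ * pcomm (xgen n k) (xgen n m) * ((xgen n k)⁻¹ * v) := by
      unfold pcomm; group
    rw [h1]
    exact Subgroup.subset_closure ⟨k, m, hmk, _, hxk, rfl⟩

lemma conj_mem_S {n : ℕ} (k : Fin n) (z : freeMetabelian n)
    (hz : z = xgen n k ∨ z = (xgen n k)⁻¹) :
    ∀ s ∈ mset n, z⁻¹ * s * z ∈ NN n := by
  rintro s ⟨i, j, hji, w, hw, rfl⟩
  by_cases hki : k ≤ i
  · have hz' : z ∈ Subgroup.closure (xgen n '' {k' : Fin n | k' ≤ i}) := by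
      rcases hz with rfl | rfl
      · exact Subgroup.subset_closure ⟨k, hki, rfl⟩
      · exact inv_mem (Subgroup.subset_closure ⟨k, hki, rfl⟩)
    have h1 : z⁻¹ * (w⁻¹ * pcomm (xgen n i) (xgen n j) * w) * z
        = (w * z)⁻¹ * pcomm (xgen n i) (xgen n j) * (w * z) := by group
    rw [h1]
    exact Subgroup.subset_closure ⟨i, j, hji, w * z, mul_mem hw hz', rfl⟩
  · push_neg at hki
    have hik : i < k := hki
    have hjk : j < k := lt_trans hji hik
    have hsub : (xgen n '' {k' : Fin n | k' ≤ i}) ⊆ (xgen n '' {k' : Fin n | k' ≤ k}) :=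
      Set.image_mono (fun m hm => le_trans hm (le_of_lt hik))
    have hwk : w ∈ Subgroup.closure (xgen n '' {k' : Fin n | k' ≤ k}) :=
      Subgroup.closure_mono hsub hw
    have hxi : xgen n i ∈ Subgroup.closure (xgen n '' {k' : Fin n | k' ≤ k}) :=
      Subgroup.subset_closure ⟨i, le_of_lt hik, rfl⟩
    have hxj : xgen n j ∈ Subgroup.closure (xgen n '' {k' : Fin n | k' ≤ k}) :=
      Subgroup.subset_closure ⟨j, le_of_lt hjk, rfl⟩
    have hc := pcomm_mem_commutator (xgen n i) (xgen n j)
    have step1 : z⁻¹ * (w⁻¹ * pcomm (xgen n i) (xgen n j) * w) * z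
        = (w * z)⁻¹ * pcomm (xgen n i) (xgen n j) * (w * z) := by group
    have step2 := conj_swap hc w z
    have step3 : (z * w)⁻¹ * pcomm (xgen n i) (xgen n j) * (z * w)
        = w⁻¹ * (z⁻¹ * pcomm (xgen n i) (xgen n j) * z) * w := by group
    rw [step1, step2, step3, key_ident (xgen n j) (xgen n i) z w]
    refine mul_mem (mul_mem (mul_mem (mul_mem
      (inv_mem (pc_mem hik z hz hwk))
      (inv_mem (pc_mem hjk z hz (mul_mem hxi hwk))))
      (Subgroup.subset_closure ⟨i, j, hji, w, hw, rfl⟩))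
      (pc_mem hik z hz (mul_mem hxj hwk)))
      (pc_mem hjk z hz hwk)

lemma conj_mem_N {n : ℕ} (k : Fin n) (z : freeMetabelian n)
    (hz : z = xgen n k ∨ z = (xgen n k)⁻¹) {h : freeMetabelian n} (hh : h ∈ NN n) :
    z⁻¹ * h * z ∈ NN n := by
  induction hh using Subgroup.closure_induction with
  | mem s hs => exact conj_mem_S k z hz s hs
  | one => simpa using one_mem (NN n)
  | mul a b ha hb iha ihb =>
    have h1 : z⁻¹ * (a * b) * z = (z⁻¹ * a * z) * (z⁻¹ * b * z) := by group
    rw [h1]; exact mul_mem iha ihb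
  | inv a ha iha =>
    have h1 : z⁻¹ * a⁻¹ * z = (z⁻¹ * a * z)⁻¹ := by group
    rw [h1]; exact inv_mem iha

lemma gen_top (n : ℕ) : Subgroup.closure (Set.range (xgen n)) = ⊤ := by
  have h1 : Set.range (xgen n)
      = (QuotientGroup.mk' (derivedSeries (FreeGroup (Fin n)) 2)) ''
        Set.range (FreeGroup.of (α := Fin n)) := by
    rw [← Set.range_comp]; rfl
  have h2 : Subgroup.closure ((QuotientGroup.mk' (derivedSeries (FreeGroup (Fin n)) 2)) ''
      Set.range (FreeGroup.of (α := Fin n))) = ⊤ := by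
    rw [← MonoidHom.map_closure (QuotientGroup.mk' (derivedSeries (FreeGroup (Fin n)) 2))
      (Set.range (FreeGroup.of (α := Fin n))), FreeGroup.closure_range_of,
      Subgroup.map_top_of_surjective _ (QuotientGroup.mk'_surjective _)]
  rw [h1]; exact h2

lemma NN_normal (n : ℕ) : (NN n).Normal := by
  rw [← Subgroup.normalizer_eq_top_iff, eq_top_iff, ← gen_top n, Subgroup.closure_le]
  rintro _ ⟨k, rfl⟩
  rw [SetLike.mem_coe, Subgroup.mem_normalizer_iff]
  intro h
  constructor
  · intro hh
    have := conj_mem_N k (xgen n k)⁻¹ (Or.inr rfl) hh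
    simpa using this
  · intro hh
    have := conj_mem_N k (xgen n k) (Or.inl rfl) hh
    have h1 : (xgen n k)⁻¹ * (xgen n k * h * (xgen n k)⁻¹) * xgen n k = h := by group
    rwa [h1] at this

/-! ### Products of powers of commuting elements -/

lemma prod_pow_mul {Q : Type*} [Group Q] {ι : Type*} (y : ι → Q)
    (hc : ∀ i j, Commute (y i) (y j)) (L : List ι) (γ δ : ι → ℤ) :
    (L.map fun i => y i ^ γ i).prod * (L.map fun i => y i ^ δ i).prod
      = (L.map fun i => y i ^ (γ i + δ i)).prod := by
  induction L with
  | nil => simp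
  | cons a L ih =>
    simp only [List.map_cons, List.prod_cons]
    have hcomm : Commute (y a ^ δ a) ((L.map fun i => y i ^ γ i).prod) := by
      apply Commute.list_prod_right
      intro x hx
      rcases List.mem_map.mp hx with ⟨i, _, rfl⟩
      exact ((hc a i).zpow_zpow _ _)
    calc y a ^ γ a * (L.map fun i => y i ^ γ i).prod * (y a ^ δ a * (L.map fun i => y i ^ δ i).prod)
        = y a ^ γ a * (((L.map fun i => y i ^ γ i).prod * y a ^ δ a) * (L.map fun i => y i ^ δ i).prod) := by
          group
      _ = y a ^ γ a * ((y a ^ δ a * (L.map fun i => y i ^ γ i).prod) * (L.map fun i => y i ^ δ i).prod) := by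
          rw [hcomm.symm.eq]
      _ = (y a ^ γ a * y a ^ δ a) * ((L.map fun i => y i ^ γ i).prod * (L.map fun i => y i ^ δ i).prod) := by
          group
      _ = y a ^ (γ a + δ a) * (L.map fun i => y i ^ (γ i + δ i)).prod := by
          rw [← zpow_add, ih]

lemma prod_single {Q : Type*} [Group Q] {ι : Type*} [DecidableEq ι] (y : ι → Q) (k : ι)
    (L : List ι) (hk : k ∈ L) (hnd : L.Nodup) :
    (L.map fun i => y i ^ (if i = k then (1 : ℤ) else 0)).prod = y k := by
  induction L with
  | nil => simp at hk
  | cons a L ih =>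
    rcases List.nodup_cons.mp hnd with ⟨ha, hnd'⟩
    simp only [List.map_cons, List.prod_cons]
    by_cases hak : a = k
    · subst hak
      have hone : ∀ x ∈ L.map fun i => y i ^ (if i = a then (1 : ℤ) else 0), x = 1 := by
        intro x hx
        rcases List.mem_map.mp hx with ⟨i, hi, rfl⟩
        have hia : i ≠ a := fun h => ha (h ▸ hi)
        simp [hia]
      rw [List.prod_eq_one hone]
      simp
    · have hk' : k ∈ L := by
        rcases List.mem_cons.mp hk with h | h
        · exact absurd h.symm hak
        · exact h
      rw [if_neg hak, zpow_zero, one_mul]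
      exact ih hk' hnd'

/-! ### Main theorem -/

theorem stmt13 (n : ℕ) (g : freeMetabelian n) :
    ∃ (γ : Fin n → ℤ) (u : freeMetabelian n),
      u ∈ Subgroup.closure {a : freeMetabelian n |
        ∃ i j : Fin n, j < i ∧
          ∃ w ∈ Subgroup.closure (xgen n '' {k : Fin n | k ≤ i}),
            a = w⁻¹ * pcomm (xgen n i) (xgen n j) * w} ∧
      g = ((List.finRange n).map fun i => xgen n i ^ γ i).prod * u := by
  haveI hN : (NN n).Normal := NN_normal n
  set π := QuotientGroup.mk' (NN n) with hπ
  set y : Fin n → freeMetabelian n ⧸ NN n := fun i => π (xgen n i) with hy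
  -- generators of the quotient commute
  have hcomm : ∀ i j : Fin n, Commute (y i) (y j) := by
    have key : ∀ i j : Fin n, j < i → Commute (y i) (y j) := by
      intro i j hji
      have hmem : pcomm (xgen n i) (xgen n j) ∈ NN n := by
        refine Subgroup.subset_closure ⟨i, j, hji, 1, one_mem _, by group⟩
      have h1 : π (pcomm (xgen n i) (xgen n j)) = 1 :=
        (QuotientGroup.eq_one_iff _).mpr hmem
      have h2 : pcomm (y i) (y j) = 1 := by
        rw [hy]
        simp only [← h1, pcomm, map_mul, map_inv]
      have h3 : y i * y j = y j * y i * pcomm (y i) (y j) := by unfold pcomm; group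
      rw [Commute, SemiconjBy, h3, h2, mul_one]
    intro i j
    rcases lt_trichotomy j i with h | h | h
    · exact key i j h
    · subst h; exact Commute.refl _
    · exact (key j i h).symm
  -- the quotient is generated by the (commuting) images of the generators
  have hQtop : Subgroup.closure (Set.range y) = ⊤ := by
    have h1 : Set.range y = π '' Set.range (xgen n) := by
      rw [hy, ← Set.range_comp]; rfl
    rw [h1, ← MonoidHom.map_closure, gen_top,
      Subgroup.map_top_of_surjective _ (QuotientGroup.mk'_surjective _)]
  -- every element of the quotient is an ordered product of powers of generators
  have hdecomp : ∀ q : freeMetabelian n ⧸ NN n,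
      ∃ γ : Fin n → ℤ, q = ((List.finRange n).map fun i => y i ^ γ i).prod := by
    intro q
    have hq : q ∈ Subgroup.closure (Set.range y) := by rw [hQtop]; exact Subgroup.mem_top q
    induction hq using Subgroup.closure_induction with
    | mem x hx =>
      rcases hx with ⟨k, rfl⟩
      refine ⟨fun i => if i = k then 1 else 0, ?_⟩
      rw [prod_single y k (List.finRange n) (List.mem_finRange k) (List.nodup_finRange n)]
    | one =>
      refine ⟨fun _ => 0, ?_⟩
      rw [List.prod_eq_one]
      intro x hx
      rcases List.mem_map.mp hx with ⟨i, _, rfl⟩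
      exact zpow_zero _
    | mul a b ha hb iha ihb =>
      obtain ⟨γ, rfl⟩ := iha
      obtain ⟨δ, rfl⟩ := ihb
      refine ⟨fun i => γ i + δ i, ?_⟩
      show _ = ((List.finRange n).map fun i => y i ^ (γ i + δ i)).prod
      exact prod_pow_mul y hcomm _ γ δ
    | inv a ha iha =>
      obtain ⟨γ, rfl⟩ := iha
      refine ⟨fun i => -γ i, ?_⟩
      have h1 := prod_pow_mul y hcomm (List.finRange n) γ (fun i => -γ i)
      simp only [add_neg_cancel] at h1
      have h2 : ((List.finRange n).map fun i => y i ^ (0 : ℤ)).prod = 1 := by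
        rw [List.prod_eq_one]
        intro x hx
        rcases List.mem_map.mp hx with ⟨i, _, rfl⟩
        exact zpow_zero _
      rw [h2] at h1
      show _ = ((List.finRange n).map fun i => y i ^ (-γ i)).prod
      exact inv_eq_of_mul_eq_one_right h1
  obtain ⟨γ, hγ⟩ := hdecomp (π g)
  set P : freeMetabelian n := ((List.finRange n).map fun i => xgen n i ^ γ i).prod with hP
  have hπP : π P = ((List.finRange n).map fun i => y i ^ γ i).prod := by
    have hfun : (⇑π ∘ fun i => xgen n i ^ γ i) = fun i => y i ^ γ i := by
      funext i
      simp [Function.comp, map_zpow, hy]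
    rw [hP, map_list_prod, List.map_map, hfun]
  refine ⟨γ, P⁻¹ * g, ?_, by rw [hP]; group⟩
  have : π (P⁻¹ * g) = 1 := by
    rw [map_mul, map_inv, hπP, ← hγ, inv_mul_cancel]
  exact (QuotientGroup.eq_one_iff _).mp this
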